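/- arXiv:2010.01536 — 11 statements merged into one kernel-verified Lean document; each statement's English description precedes it below -/
import Mathlib

section
/- Fitting preserves the balancing property: if M, N : I×I → ℝ are balanced means, then the function F defined by F(x,y) = M(x,y) if x ≤ y and F(x,y) = N(x,y) if x > y is a balanced mean on I. -/
/-- Fitting of means preserves the balancing property. -/
theorem fitting_preserves_balanced (I : Set ℝ) (hI : IsOpen I) (hIc : I.OrdConnected)
    (M N : ℝ → ℝ → ℝ)
    (hMmean : ∀ x ∈ I, ∀ y ∈ I, min x y ≤ M x y ∧ M x y ≤ max x y)
    (hNmean : ∀ x ∈ I, ∀ y ∈ I, min x y ≤ N x y ∧ N x y ≤ max x y)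
    (hMbal : ∀ x ∈ I, ∀ y ∈ I, M (M x (M x y)) (M (M x y) y) = M x y)
    (hNbal : ∀ x ∈ I, ∀ y ∈ I, N (N x (N x y)) (N (N x y) y) = N x y)
    (F : ℝ → ℝ → ℝ) (hF : ∀ x y : ℝ, F x y = if x ≤ y then M x y else N x y) :
    (∀ x ∈ I, ∀ y ∈ I, min x y ≤ F x y ∧ F x y ≤ max x y) ∧
    (∀ x ∈ I, ∀ y ∈ I, F (F x (F x y)) (F (F x y) y) = F x y) := by
  have hMdiag : ∀ x ∈ I, M x x = x := fun x hx =>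
    le_antisymm (by simpa using (hMmean x hx x hx).2) (by simpa using (hMmean x hx x hx).1)
  have hNdiag : ∀ x ∈ I, N x x = x := fun x hx =>
    le_antisymm (by simpa using (hNmean x hx x hx).2) (by simpa using (hNmean x hx x hx).1)
  have hFN : ∀ p ∈ I, ∀ q ∈ I, q ≤ p → F p q = N p q := by
    intro p hp q hq hqp
    rw [hF]
    split
    · next h =>
      have : p = q := le_antisymm h hqp
      subst this
      rw [hMdiag p hp, hNdiag p hp]
    · rfl
  constructor
  · intro x hx y hy
    rw [hF]
    split
    · exact hMmean x hx y hy
    · exact hNmean x hx y hy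
  · intro x hx y hy
    by_cases hxy : x ≤ y
    · have h1 := (hMmean x hx y hy).1
      have h2 := (hMmean x hx y hy).2
      rw [min_eq_left hxy] at h1
      rw [max_eq_right hxy] at h2
      have hu : M x y ∈ I := hIc.out hx hy ⟨h1, h2⟩
      have ha : M x (M x y) ≤ M x y := by
        have := (hMmean x hx (M x y) hu).2
        rwa [max_eq_right h1] at this
      have hb : M x y ≤ M (M x y) y := by
        have := (hMmean (M x y) hu y hy).1
        rwa [min_eq_left h2] at this
      rw [hF x y, if_pos hxy, hF x (M x y), if_pos h1, hF (M x y) y, if_pos h2,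
        hF, if_pos (ha.trans hb)]
      exact hMbal x hx y hy
    · have hyx : y ≤ x := le_of_not_ge hxy
      have h1 := (hNmean x hx y hy).1
      have h2 := (hNmean x hx y hy).2
      rw [min_eq_right hyx] at h1
      rw [max_eq_left hyx] at h2
      have hu : N x y ∈ I := hIc.out hy hx ⟨h1, h2⟩
      have ha : N x y ≤ N x (N x y) := by
        have := (hNmean x hx (N x y) hu).1
        rwa [min_eq_right h2] at this
      have hb : N (N x y) y ≤ N x y := by
        have := (hNmean (N x y) hu y hy).2
        rwa [max_eq_left h1] at this
      have haI : N x (N x y) ∈ I := hIc.out hu hx ⟨ha, (hNmean x hx (N x y) hu).2.trans (by rw [max_eq_left h2])⟩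
      have hbI : N (N x y) y ∈ I := hIc.out hy hu ⟨by simpa [min_eq_right h1] using (hNmean (N x y) hu y hy).1, hb⟩
      rw [hF x y, if_neg hxy, hFN x hx (N x y) hu h2, hFN (N x y) hu y hy h1,
        hFN (N x (N x y)) haI (N (N x y) y) hbI (hb.trans ha)]
      exact hNbal x hx y hy
end

section
/- The discontinuous function M : ℝ×ℝ → ℝ defined by M(x,y) = y if both x,y ∈ ℚ and M(x,y) = x otherwise, is a mean and is balanced. -/
open Classical in
/-- The everywhere-discontinuous function `M(x,y) = y` if `x, y ∈ ℚ`, `M(x,y) = x`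
otherwise, is a balanced mean on `ℝ`. -/
theorem rational_switch_mean_balanced (M : ℝ → ℝ → ℝ)
    (hM : ∀ x y : ℝ,
      M x y = if (∃ p : ℚ, (p : ℝ) = x) ∧ (∃ q : ℚ, (q : ℝ) = y) then y else x) :
    (∀ x y : ℝ, min x y ≤ M x y ∧ M x y ≤ max x y) ∧
    (∀ x y : ℝ, M (M x (M x y)) (M (M x y) y) = M x y) := by
  constructor
  · intro x y
    rw [hM]
    by_cases h : (∃ p : ℚ, (p : ℝ) = x) ∧ (∃ q : ℚ, (q : ℝ) = y) <;>
      simp [h, min_le_right, min_le_left, le_max_right, le_max_left]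
  · intro x y
    by_cases hx : ∃ p : ℚ, (p : ℝ) = x <;> by_cases hy : ∃ q : ℚ, (q : ℝ) = y <;>
      simp [hM, hx, hy]
end

section
/- Let A, B ⊆ ℝ₊ be disjoint nonempty sets with A ∪ B = ℝ₊. Define M : ℝ₊×ℝ₊ → ℝ by M(x,y) = y if x/y ∈ A and M(x,y) = x if x/y ∈ B. Then M is a balanced mean and M is positively homogeneous: M(tx, ty) = t·M(x,y) for all t, x, y > 0. -/
open Classical in
/-- A discontinuous, positively homogeneous, balanced mean on the positive reals. -/
theorem homogeneous_switch_mean_balanced (A B : Set ℝ)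
    (hA : A ⊆ {x : ℝ | 0 < x}) (hB : B ⊆ {x : ℝ | 0 < x})
    (hAne : A.Nonempty) (hBne : B.Nonempty)
    (hdisj : A ∩ B = ∅) (hunion : A ∪ B = {x : ℝ | 0 < x})
    (M : ℝ → ℝ → ℝ)
    (hM : ∀ x y : ℝ, M x y = if x / y ∈ A then y else x) :
    (∀ x y : ℝ, 0 < x → 0 < y → min x y ≤ M x y ∧ M x y ≤ max x y) ∧
    (∀ x y : ℝ, 0 < x → 0 < y → M (M x (M x y)) (M (M x y) y) = M x y) ∧
    (∀ t x y : ℝ, 0 < t → 0 < x → 0 < y → M (t * x) (t * y) = t * M x y) := by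
  have hself : ∀ z : ℝ, M z z = z := by
    intro z; rw [hM]; split <;> rfl
  refine ⟨?_, ?_, ?_⟩
  · intro x y hx hy
    rw [hM]
    split
    · exact ⟨min_le_right _ _, le_max_right _ _⟩
    · exact ⟨min_le_left _ _, le_max_left _ _⟩
  · intro x y hx hy
    by_cases h : x / y ∈ A
    · have h1 : M x y = y := by rw [hM, if_pos h]
      simp [h1, hself]
    · have h1 : M x y = x := by rw [hM, if_neg h]
      simp [h1, hself]
  · intro t x y ht hx hy
    have hr : t * x / (t * y) = x / y := by
      rw [mul_div_mul_left _ _ (ne_of_gt ht)]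
    rw [hM, hM, hr]
    split <;> ring
end

section
/- Every Matkowski mean is iteratively quasi-arithmetic with respect to Φ := f+g: if f,g : I → ℝ are continuous strictly increasing and M(x,y) = (f+g)⁻¹(f(x)+g(y)), then for all x,y ∈ I, M(x,y) = (f+g)⁻¹((((f+g)(M(x,M(x,y))) + (f+g)(M(M(x,y),y)))/2)). -/
/-- Every Matkowski mean is iteratively quasi-arithmetic w.r.t. `Φ = f + g`. -/
theorem matkowski_iteratively_quasiArithmetic (I : Set ℝ) (hI : IsOpen I)
    (hIne : I.Nonempty) (hIc : I.OrdConnected) (f g Finv : ℝ → ℝ)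
    (hfc : ContinuousOn f I) (hgc : ContinuousOn g I)
    (hfm : StrictMonoOn f I) (hgm : StrictMonoOn g I)
    (hleft : ∀ x ∈ I, Finv (f x + g x) = x)
    (hright : ∀ z ∈ (fun t => f t + g t) '' I,
      Finv z ∈ I ∧ f (Finv z) + g (Finv z) = z)
    (himg : ∀ x ∈ I, ∀ y ∈ I, f x + g y ∈ (fun t => f t + g t) '' I)
    (M : ℝ → ℝ → ℝ) (hM : ∀ x y : ℝ, M x y = Finv (f x + g y)) :
    ∀ x ∈ I, ∀ y ∈ I,
      M x y = Finv (((f (M x (M x y)) + g (M x (M x y))) +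
        (f (M (M x y) y) + g (M (M x y) y))) / 2) := by
  intro x hx y hy
  obtain ⟨hmI, hmΦ⟩ := hright _ (himg x hx y hy)
  rw [← hM x y] at hmI hmΦ
  obtain ⟨h1I, h1Φ⟩ := hright _ (himg x hx (M x y) hmI)
  rw [← hM x (M x y)] at h1Φ
  obtain ⟨h2I, h2Φ⟩ := hright _ (himg (M x y) hmI y hy)
  rw [← hM (M x y) y] at h2Φ
  rw [h1Φ, h2Φ]
  have : (f x + g (M x y) + (f (M x y) + g y)) / 2 = f (M x y) + g (M x y) := by
    linarith [hmΦ]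
  rw [this, hleft _ hmI]
end

section
/- A Matkowski mean M_{f,g} with f,g continuous strictly increasing on I is symmetric (M(x,y) = M(y,x) for all x,y ∈ I) if and only if there is a constant c ∈ ℝ with f = g + c on I. -/
/-- A Matkowski mean is symmetric iff `f = g + c` for some constant `c`. -/
theorem matkowski_symmetric_iff (I : Set ℝ) (hI : IsOpen I) (hIne : I.Nonempty)
    (hIc : I.OrdConnected) (f g Finv : ℝ → ℝ)
    (hfc : ContinuousOn f I) (hgc : ContinuousOn g I)
    (hfm : StrictMonoOn f I) (hgm : StrictMonoOn g I)
    (hleft : ∀ x ∈ I, Finv (f x + g x) = x)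
    (hright : ∀ z ∈ (fun t => f t + g t) '' I,
      Finv z ∈ I ∧ f (Finv z) + g (Finv z) = z)
    (himg : ∀ x ∈ I, ∀ y ∈ I, f x + g y ∈ (fun t => f t + g t) '' I)
    (M : ℝ → ℝ → ℝ) (hM : ∀ x y : ℝ, M x y = Finv (f x + g y)) :
    (∀ x ∈ I, ∀ y ∈ I, M x y = M y x) ↔ (∃ c : ℝ, ∀ x ∈ I, f x = g x + c) := by
  constructor
  · intro h
    obtain ⟨x0, hx0⟩ := hIne
    refine ⟨f x0 - g x0, fun x hx => ?_⟩
    have hsym := h x hx x0 hx0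
    rw [hM, hM] at hsym
    have h1 := hright _ (himg x hx x0 hx0)
    have h2 := hright _ (himg x0 hx0 x hx)
    have : f x + g x0 = f x0 + g x := by
      rw [← h1.2, ← h2.2, hsym]
    linarith
  · intro ⟨c, hc⟩ x hx y hy
    rw [hM, hM, hc x hx, hc y hy]
    ring_nf
end

section
/- Let Φ : I → ℝ be continuous strictly monotone and t ∈ (0,1) \ {1/2}. Define the weighted quasi-arithmetic mean A_Φ^t(x,y) = Φ⁻¹(tΦ(x)+(1-t)Φ(y)) and K(x,y) := A_Φ^t(min(x,y), max(x,y)). Then K is iteratively quasi-arithmetic with respect to Φ: K(x,y) = Φ⁻¹((Φ(K(x,u)) + Φ(K(u,y)))/2) where u = K(x,y), for all x,y ∈ I. -/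
lemma aux_mem_wqam (I : Set ℝ) (hIc : I.OrdConnected) (Φ Φinv : ℝ → ℝ)
    (hΦc : ContinuousOn Φ I)
    (hΦm : StrictMonoOn Φ I ∨ StrictAntiOn Φ I)
    (hright : ∀ z ∈ Φ '' I, Φinv z ∈ I ∧ Φ (Φinv z) = z)
    (s : ℝ) (hs0 : 0 ≤ s) (hs1 : s ≤ 1)
    {a b : ℝ} (ha : a ∈ I) (hb : b ∈ I) (hab : a ≤ b) :
    Φinv (s * Φ a + (1 - s) * Φ b) ∈ I ∧
      Φ (Φinv (s * Φ a + (1 - s) * Φ b)) = s * Φ a + (1 - s) * Φ b ∧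
      a ≤ Φinv (s * Φ a + (1 - s) * Φ b) ∧ Φinv (s * Φ a + (1 - s) * Φ b) ≤ b := by
  have hpre : IsPreconnected I := hIc.isPreconnected
  have himg : (Φ '' I).OrdConnected := (hpre.image Φ hΦc).ordConnected
  set z := s * Φ a + (1 - s) * Φ b with hz
  have hzmem : z ∈ Φ '' I := by
    rcases hΦm with hm | hm
    · have h1 : Φ a ≤ Φ b := by
        rcases eq_or_lt_of_le hab with h | h
        · rw [h]
        · exact (hm ha hb h).le
      exact himg.out ⟨a, ha, rfl⟩ ⟨b, hb, rfl⟩ ⟨by nlinarith, by nlinarith⟩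
    · have h1 : Φ b ≤ Φ a := by
        rcases eq_or_lt_of_le hab with h | h
        · rw [h]
        · exact (hm ha hb h).le
      exact himg.out ⟨b, hb, rfl⟩ ⟨a, ha, rfl⟩ ⟨by nlinarith, by nlinarith⟩
  obtain ⟨hu, hΦu⟩ := hright z hzmem
  refine ⟨hu, hΦu, ?_, ?_⟩
  · rcases hΦm with hm | hm
    · have h1 : Φ a ≤ Φ b := by
        rcases eq_or_lt_of_le hab with h | h
        · rw [h]
        · exact (hm ha hb h).le
      have h2 : Φ a ≤ Φ (Φinv z) := by rw [hΦu]; nlinarith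
      exact (hm.le_iff_le ha hu).mp h2
    · have h1 : Φ b ≤ Φ a := by
        rcases eq_or_lt_of_le hab with h | h
        · rw [h]
        · exact (hm ha hb h).le
      have h2 : Φ (Φinv z) ≤ Φ a := by rw [hΦu]; nlinarith
      exact (hm.le_iff_ge hu ha).mp h2
  · rcases hΦm with hm | hm
    · have h1 : Φ a ≤ Φ b := by
        rcases eq_or_lt_of_le hab with h | h
        · rw [h]
        · exact (hm ha hb h).le
      have h2 : Φ (Φinv z) ≤ Φ b := by rw [hΦu]; nlinarith
      exact (hm.le_iff_le hu hb).mp h2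
    · have h1 : Φ b ≤ Φ a := by
        rcases eq_or_lt_of_le hab with h | h
        · rw [h]
        · exact (hm ha hb h).le
      have h2 : Φ b ≤ Φ (Φinv z) := by rw [hΦu]; nlinarith
      exact (hm.le_iff_ge hb hu).mp h2

lemma main_le_wqam (I : Set ℝ) (hIc : I.OrdConnected) (Φ Φinv : ℝ → ℝ)
    (hΦc : ContinuousOn Φ I)
    (hΦm : StrictMonoOn Φ I ∨ StrictAntiOn Φ I)
    (hright : ∀ z ∈ Φ '' I, Φinv z ∈ I ∧ Φ (Φinv z) = z)
    (t : ℝ) (ht0 : 0 < t) (ht1 : t < 1)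
    (K : ℝ → ℝ → ℝ)
    (hK : ∀ x y : ℝ,
      K x y = Φinv (t * Φ (min x y) + (1 - t) * Φ (max x y)))
    {x y : ℝ} (hx : x ∈ I) (hy : y ∈ I) (hxy : x ≤ y) :
    K x y = Φinv ((Φ (K x (K x y)) + Φ (K (K x y) y)) / 2) := by
  obtain ⟨hu, hΦu, hxu, huy⟩ :=
    aux_mem_wqam I hIc Φ Φinv hΦc hΦm hright t ht0.le ht1.le hx hy hxy
  set z := t * Φ x + (1 - t) * Φ y with hz
  have hKxy : K x y = Φinv z := by
    rw [hK, min_eq_left hxy, max_eq_right hxy]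
  have hKxu : K x (Φinv z) = Φinv (t * Φ x + (1 - t) * z) := by
    rw [hK, min_eq_left hxu, max_eq_right hxu, hΦu]
  have hKuy : K (Φinv z) y = Φinv (t * z + (1 - t) * Φ y) := by
    rw [hK, min_eq_left huy, max_eq_right huy, hΦu]
  obtain ⟨-, h1, -, -⟩ :=
    aux_mem_wqam I hIc Φ Φinv hΦc hΦm hright t ht0.le ht1.le hx hu hxu
  obtain ⟨-, h2, -, -⟩ :=
    aux_mem_wqam I hIc Φ Φinv hΦc hΦm hright t ht0.le ht1.le hu hy huy
  rw [hΦu] at h1 h2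
  rw [hKxy, hKxu, hKuy, h1, h2]
  have : (t * Φ x + (1 - t) * z + (t * z + (1 - t) * Φ y)) / 2 = z := by
    rw [hz]; ring
  rw [this]

/-- The symmetrized weighted quasi-arithmetic mean `K` is iteratively
quasi-arithmetic with respect to `Φ`. -/
theorem weighted_mean_iteratively_quasiArithmetic (I : Set ℝ) (hI : IsOpen I)
    (hIne : I.Nonempty) (hIc : I.OrdConnected) (Φ Φinv : ℝ → ℝ)
    (hΦc : ContinuousOn Φ I)
    (hΦm : StrictMonoOn Φ I ∨ StrictAntiOn Φ I)
    (hleft : ∀ x ∈ I, Φinv (Φ x) = x)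
    (hright : ∀ z ∈ Φ '' I, Φinv z ∈ I ∧ Φ (Φinv z) = z)
    (t : ℝ) (ht0 : 0 < t) (ht1 : t < 1) (ht : t ≠ 1 / 2)
    (K : ℝ → ℝ → ℝ)
    (hK : ∀ x y : ℝ,
      K x y = Φinv (t * Φ (min x y) + (1 - t) * Φ (max x y))) :
    ∀ x ∈ I, ∀ y ∈ I,
      K x y = Φinv ((Φ (K x (K x y)) + Φ (K (K x y) y)) / 2) := by
  intro x hx y hy
  have hsymm : ∀ a b : ℝ, K a b = K b a := by
    intro a b; rw [hK, hK, min_comm, max_comm]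
  rcases le_total x y with hxy | hyx
  · exact main_le_wqam I hIc Φ Φinv hΦc hΦm hright t ht0 ht1 K hK hx hy hxy
  · rw [hsymm x y, hsymm x (K y x), hsymm (K y x) y, add_comm]
    exact main_le_wqam I hIc Φ Φinv hΦc hΦm hright t ht0 ht1 K hK hy hx hyx
end

section
/- The mean K(x,y) = A_Φ^t(min(x,y), max(x,y)) with t ∈ (0,1), t ≠ 1/2, is not bisymmetric: there exist x,y,u,v ∈ I with K(K(x,y),K(u,v)) ≠ K(K(x,u),K(y,v)). -/
/-- The mean `K` with weight `t ≠ 1/2` is not bisymmetric. -/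
theorem weighted_mean_not_bisymmetric (I : Set ℝ) (hI : IsOpen I)
    (hIc : I.OrdConnected) (a b : ℝ) (ha : a ∈ I) (hb : b ∈ I) (hab : a ≠ b)
    (Φ Φinv : ℝ → ℝ)
    (hΦc : ContinuousOn Φ I)
    (hΦm : StrictMonoOn Φ I ∨ StrictAntiOn Φ I)
    (hleft : ∀ x ∈ I, Φinv (Φ x) = x)
    (hright : ∀ z ∈ Φ '' I, Φinv z ∈ I ∧ Φ (Φinv z) = z)
    (t : ℝ) (ht0 : 0 < t) (ht1 : t < 1) (ht : t ≠ 1 / 2)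
    (K : ℝ → ℝ → ℝ)
    (hK : ∀ x y : ℝ,
      K x y = Φinv (t * Φ (min x y) + (1 - t) * Φ (max x y))) :
    ∃ x ∈ I, ∃ y ∈ I, ∃ u ∈ I, ∃ v ∈ I,
      K (K x y) (K u v) ≠ K (K x u) (K y v) := by
  have hinj : Set.InjOn Φ I := fun x hx y hy h => by
    rw [← hleft x hx, h, hleft y hy]
  have hIoc : (Φ '' I).OrdConnected :=
    ((hIc.isPreconnected).image Φ hΦc).ordConnected
  have ht1' : (0:ℝ) < 1 - t := by linarith
  -- Key lemma: K maps I×I into I and its Φ-value is the weighted combination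
  have key : ∀ x ∈ I, ∀ y ∈ I, K x y ∈ I ∧
      Φ (K x y) = t * Φ (min x y) + (1 - t) * Φ (max x y) := by
    intro x hx y hy
    have hmin : min x y ∈ I := by rcases min_choice x y with h | h <;> rw [h] <;> assumption
    have hmax : max x y ∈ I := by rcases max_choice x y with h | h <;> rw [h] <;> assumption
    set z := t * Φ (min x y) + (1 - t) * Φ (max x y) with hz
    have hzmem : z ∈ Φ '' I := by
      apply hIoc.uIcc_subset ⟨_, hmin, rfl⟩ ⟨_, hmax, rfl⟩
      rw [Set.mem_uIcc]
      rcases le_total (Φ (min x y)) (Φ (max x y)) with h | h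
      · left; constructor <;> nlinarith
      · right; constructor <;> nlinarith
    obtain ⟨h1, h2⟩ := hright z hzmem
    rw [hK x y]
    exact ⟨h1, h2⟩
  -- order the two base points
  set a' := min a b with ha'def
  set b' := max a b with hb'def
  have ha' : a' ∈ I := by rcases min_choice a b with h | h <;> rw [ha'def, h] <;> assumption
  have hb' : b' ∈ I := by rcases max_choice a b with h | h <;> rw [hb'def, h] <;> assumption
  have hab' : a' < b' := min_lt_max.mpr hab
  set p := Φ a' with hp
  set q := Φ b' with hq
  have hpq : p ≠ q := fun h => hab'.ne (hinj ha' hb' h)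
  -- the mean m of a' and b'
  obtain ⟨hm, hΦm'⟩ := key a' ha' b' hb'
  set m := K a' b' with hmdef
  rw [min_eq_left hab'.le, max_eq_right hab'.le] at hΦm'
  -- m lies strictly between a' and b'
  have hbetween : a' < m ∧ m < b' := by
    rcases hΦm with hmono | hanti
    · have h1 : p < q := hmono ha' hb' hab'
      have h2 : p < Φ m := by rw [hΦm']; nlinarith
      have h3 : Φ m < q := by rw [hΦm']; nlinarith
      exact ⟨(hmono.lt_iff_lt ha' hm).mp h2, (hmono.lt_iff_lt hm hb').mp h3⟩
    · have h1 : q < p := hanti ha' hb' hab'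
      have h2 : Φ m < p := by rw [hΦm']; nlinarith
      have h3 : q < Φ m := by rw [hΦm']; nlinarith
      exact ⟨(hanti.lt_iff_gt hm ha').mp h2, (hanti.lt_iff_gt hb' hm).mp h3⟩
  obtain ⟨ham, hmb⟩ := hbetween
  -- the inner means
  obtain ⟨hc1, hΦc1⟩ := key a' ha' m hm
  obtain ⟨hc2, hΦc2⟩ := key b' hb' m hm
  set c1 := K a' m with hc1def
  set c2 := K b' m with hc2def
  rw [min_eq_left ham.le, max_eq_right ham.le] at hΦc1
  rw [min_eq_right hmb.le, max_eq_left hmb.le] at hΦc2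
  -- c1 < c2
  have hc1c2 : c1 < c2 := by
    rcases hΦm with hmono | hanti
    · have h1 : p < q := hmono ha' hb' hab'
      have h2 : Φ c1 < Φ c2 := by
        rw [hΦc1, hΦc2, hΦm']
        nlinarith [mul_pos (mul_pos ht0 ht1') (sub_pos.mpr h1)]
      exact (hmono.lt_iff_lt hc1 hc2).mp h2
    · have h1 : q < p := hanti ha' hb' hab'
      have h2 : Φ c2 < Φ c1 := by
        rw [hΦc1, hΦc2, hΦm']
        nlinarith [mul_pos (mul_pos ht0 ht1') (sub_pos.mpr h1)]
      exact (hanti.lt_iff_gt hc2 hc1).mp h2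
  -- left hand side
  obtain ⟨hL, hΦL⟩ := key c1 hc1 c2 hc2
  rw [min_eq_left hc1c2.le, max_eq_right hc1c2.le] at hΦL
  -- right hand side: K m m = m
  obtain ⟨hmm, hΦmm⟩ := key m hm m hm
  have hΦmm' : Φ (K m m) = Φ m := by rw [hΦmm, min_self, max_self]; ring
  have hKmm : K m m = m := hinj hmm hm hΦmm'
  obtain ⟨hR, hΦR⟩ := key m hm m hm
  -- final inequality
  refine ⟨a', ha', m, hm, b', hb', m, hm, fun heq => ?_⟩
  have hfinal : Φ (K c1 c2) - Φ (K m (K m m)) = t * (1 - t) * (2 * t - 1) * (p - q) := by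
    rw [hΦL, hKmm, hΦmm', hΦc1, hΦc2, hΦm']
    ring
  have hne : t * (1 - t) * (2 * t - 1) * (p - q) ≠ 0 := by
    apply mul_ne_zero
    apply mul_ne_zero
    apply mul_ne_zero
    · exact ht0.ne'
    · exact ht1'.ne'
    · intro h; apply ht; linarith
    · exact sub_ne_zero.mpr hpq
  have heq2 : K c1 c2 = K m (K m m) := heq
  apply hne
  rw [← hfinal, heq2, sub_self]
end

section
/- Let L, R : I×I → ℝ be continuous strictly monotone means and fix v ∈ I. Let R_v(t) := R(t,v), L_v(t) := L(t,v), J_v := R_v(I), and ψ_v := L_v ∘ R_v⁻¹ : J_v → ℝ. If R_v < L_v on I ∩ (-∞,v) and R_v > L_v on I ∩ (v,∞), then ψ_v(J_v) ⊆ J_v, ψ_v(v) = v, and for every ξ ∈ J_v with ξ ≠ v, the iterate sequence (ψ_v^[n](ξ))_{n≥0} is strictly monotone and converges to v. -/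
open Filter Topology

/-- Lemma 1: attractivity of the fixed point `v` of `ψ_v = L_v ∘ R_v⁻¹`. -/
theorem psi_orbit_converges (I : Set ℝ) (hI : IsOpen I) (hIne : I.Nonempty)
    (hIc : I.OrdConnected) (L R : ℝ → ℝ → ℝ)
    (hLc1 : ∀ y ∈ I, ContinuousOn (fun x => L x y) I)
    (hLc2 : ∀ x ∈ I, ContinuousOn (fun y => L x y) I)
    (hLm1 : ∀ y ∈ I, StrictMonoOn (fun x => L x y) I)
    (hLm2 : ∀ x ∈ I, StrictMonoOn (fun y => L x y) I)
    (hLmean : ∀ x ∈ I, ∀ y ∈ I, min x y ≤ L x y ∧ L x y ≤ max x y)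
    (hRc1 : ∀ y ∈ I, ContinuousOn (fun x => R x y) I)
    (hRc2 : ∀ x ∈ I, ContinuousOn (fun y => R x y) I)
    (hRm1 : ∀ y ∈ I, StrictMonoOn (fun x => R x y) I)
    (hRm2 : ∀ x ∈ I, StrictMonoOn (fun y => R x y) I)
    (hRmean : ∀ x ∈ I, ∀ y ∈ I, min x y ≤ R x y ∧ R x y ≤ max x y)
    (v : ℝ) (hv : v ∈ I)
    (hlt : ∀ t ∈ I, t < v → R t v < L t v)
    (hgt : ∀ t ∈ I, v < t → L t v < R t v)
    (Rvinv : ℝ → ℝ)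
    (hRvleft : ∀ t ∈ I, Rvinv (R t v) = t)
    (hRvright : ∀ z ∈ (fun t => R t v) '' I,
      Rvinv z ∈ I ∧ R (Rvinv z) v = z)
    (ψ : ℝ → ℝ) (hψ : ∀ z : ℝ, ψ z = L (Rvinv z) v) :
    (∀ z ∈ (fun t => R t v) '' I, ψ z ∈ (fun t => R t v) '' I) ∧
    ψ v = v ∧
    (∀ ξ ∈ (fun t => R t v) '' I, ξ ≠ v →
      (StrictMono (fun n : ℕ => ψ^[n] ξ) ∨ StrictAnti (fun n : ℕ => ψ^[n] ξ)) ∧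
      Tendsto (fun n : ℕ => ψ^[n] ξ) atTop (𝓝 v)) := by
  set J := (fun t => R t v) '' I with hJdef
  have hRvv : R v v = v := by
    have h := hRmean v hv v hv
    simp only [min_self, max_self] at h
    exact le_antisymm h.2 h.1
  have hLvv : L v v = v := by
    have h := hLmean v hv v hv
    simp only [min_self, max_self] at h
    exact le_antisymm h.2 h.1
  have hvJ : v ∈ J := ⟨v, hv, hRvv⟩
  have hJoc : J.OrdConnected :=
    ((hIc.isPreconnected).image _ (hRc1 v hv)).ordConnected
  have hψv : ψ v = v := by
    rw [hψ v]
    have hinv : Rvinv v = v := by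
      conv_lhs => rw [← hRvv]
      exact hRvleft v hv
    rw [hinv, hLvv]
  have hstep_lt : ∀ z ∈ J, z < v → z < ψ z ∧ ψ z < v ∧ ψ z ∈ J := by
    intro z hz hzv
    obtain ⟨ht, hRt⟩ := hRvright z hz
    set t := Rvinv z with htdef
    have htv : t < v := ((hRm1 v hv).lt_iff_lt ht hv).mp
      (by show R t v < R v v; rw [hRt, hRvv]; exact hzv)
    have h1 : z < ψ z := by
      rw [hψ z, ← htdef, ← hRt]
      exact hlt t ht htv
    have h2 : ψ z < v := by
      rw [hψ z, ← htdef]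
      calc L t v < L v v := (hLm1 v hv) ht hv htv
        _ = v := hLvv
    exact ⟨h1, h2, hJoc.out hz hvJ ⟨h1.le, h2.le⟩⟩
  have hstep_gt : ∀ z ∈ J, v < z → ψ z < z ∧ v < ψ z ∧ ψ z ∈ J := by
    intro z hz hzv
    obtain ⟨ht, hRt⟩ := hRvright z hz
    set t := Rvinv z with htdef
    have htv : v < t := ((hRm1 v hv).lt_iff_lt hv ht).mp
      (by show R v v < R t v; rw [hRt, hRvv]; exact hzv)
    have h1 : ψ z < z := by
      rw [hψ z, ← htdef, ← hRt]
      exact hgt t ht htv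
    have h2 : v < ψ z := by
      rw [hψ z, ← htdef]
      calc v = L v v := hLvv.symm
        _ < L t v := (hLm1 v hv) hv ht htv
    exact ⟨h1, h2, hJoc.out hvJ hz ⟨h2.le, h1.le⟩⟩
  have part1 : ∀ z ∈ J, ψ z ∈ J := by
    intro z hz
    rcases lt_trichotomy z v with h | h | h
    · exact (hstep_lt z hz h).2.2
    · rw [h, hψv]; exact hvJ
    · exact (hstep_gt z hz h).2.2
  refine ⟨part1, hψv, ?_⟩
  intro ξ hξ hξv
  set x := fun n : ℕ => ψ^[n] ξ with hxdef
  have hxsucc : ∀ n, x (n + 1) = ψ (x n) := fun n => Function.iterate_succ_apply' ψ n ξ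
  rcases lt_or_gt_of_ne hξv with hcase | hcase
  · -- increasing case : ξ < v
    have hx : ∀ n, x n ∈ J ∧ x n < v := by
      intro n
      induction n with
      | zero => exact ⟨hξ, hcase⟩
      | succ n ih =>
        rw [hxsucc n]
        exact ⟨(hstep_lt _ ih.1 ih.2).2.2, (hstep_lt _ ih.1 ih.2).2.1⟩
    have hmono : StrictMono x := by
      apply strictMono_nat_of_lt_succ
      intro n
      rw [hxsucc n]
      exact (hstep_lt _ (hx n).1 (hx n).2).1
    have hbdd : BddAbove (Set.range x) := ⟨v, by rintro _ ⟨n, rfl⟩; exact (hx n).2.le⟩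
    have hten : Tendsto x atTop (𝓝 (⨆ n, x n)) := tendsto_atTop_ciSup hmono.monotone hbdd
    set l := ⨆ n, x n with hldef
    have hlle : l ≤ v := ciSup_le fun n => (hx n).2.le
    have hlv : l = v := by
      by_contra hne
      have hllt : l < v := lt_of_le_of_ne hlle hne
      set t := fun n => Rvinv (x n) with htdef
      have ht : ∀ n, t n ∈ I ∧ R (t n) v = x n := fun n => hRvright _ (hx n).1
      have htv : ∀ n, t n < v := fun n => ((hRm1 v hv).lt_iff_lt (ht n).1 hv).mp
        (by show R (t n) v < R v v; rw [(ht n).2, hRvv]; exact (hx n).2)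
      have htmono : Monotone t := by
        intro m n hmn
        exact ((hRm1 v hv).le_iff_le (ht m).1 (ht n).1).mp
          (by show R (t m) v ≤ R (t n) v; rw [(ht m).2, (ht n).2]; exact hmono.monotone hmn)
      have hbt : BddAbove (Set.range t) := ⟨v, by rintro _ ⟨n, rfl⟩; exact (htv n).le⟩
      have httend : Tendsto t atTop (𝓝 (⨆ n, t n)) := tendsto_atTop_ciSup htmono hbt
      set τ := ⨆ n, t n with hτdef
      have hτI : τ ∈ I := hIc.out (ht 0).1 hv ⟨le_ciSup hbt 0, ciSup_le fun n => (htv n).le⟩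
      have httend' : Tendsto t atTop (𝓝[I] τ) :=
        tendsto_nhdsWithin_of_tendsto_nhds_of_eventually_within _ httend
          (Eventually.of_forall fun n => (ht n).1)
      have hRτ : Tendsto (fun n => R (t n) v) atTop (𝓝 (R τ v)) :=
        ((hRc1 v hv τ hτI).tendsto).comp httend'
      have hRτl : R τ v = l :=
        tendsto_nhds_unique (hRτ.congr fun n => (ht n).2) hten
      have hτv : τ < v := ((hRm1 v hv).lt_iff_lt hτI hv).mp
        (by show R τ v < R v v; rw [hRτl, hRvv]; exact hllt)
      have hLτ : Tendsto (fun n => L (t n) v) atTop (𝓝 (L τ v)) :=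
        ((hLc1 v hv τ hτI).tendsto).comp httend'
      have hLx : ∀ n, L (t n) v = x (n + 1) := by
        intro n
        rw [hxsucc n, hψ (x n)]
      have hshift : Tendsto (fun n => x (n + 1)) atTop (𝓝 l) :=
        hten.comp (tendsto_add_atTop_nat 1)
      have hLτl : L τ v = l := tendsto_nhds_unique (hLτ.congr hLx) hshift
      have hcontra := hlt τ hτI hτv
      rw [hRτl, hLτl] at hcontra
      exact lt_irrefl _ hcontra
    exact ⟨Or.inl hmono, hlv ▸ hten⟩
  · -- decreasing case : v < ξ
    have hx : ∀ n, x n ∈ J ∧ v < x n := by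
      intro n
      induction n with
      | zero => exact ⟨hξ, hcase⟩
      | succ n ih =>
        rw [hxsucc n]
        exact ⟨(hstep_gt _ ih.1 ih.2).2.2, (hstep_gt _ ih.1 ih.2).2.1⟩
    have hmono : StrictAnti x := by
      apply strictAnti_nat_of_succ_lt
      intro n
      rw [hxsucc n]
      exact (hstep_gt _ (hx n).1 (hx n).2).1
    have hbdd : BddBelow (Set.range x) := ⟨v, by rintro _ ⟨n, rfl⟩; exact (hx n).2.le⟩
    have hten : Tendsto x atTop (𝓝 (⨅ n, x n)) := tendsto_atTop_ciInf hmono.antitone hbdd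
    set l := ⨅ n, x n with hldef
    have hlle : v ≤ l := le_ciInf fun n => (hx n).2.le
    have hlv : l = v := by
      by_contra hne
      have hllt : v < l := lt_of_le_of_ne hlle (Ne.symm hne)
      set t := fun n => Rvinv (x n) with htdef
      have ht : ∀ n, t n ∈ I ∧ R (t n) v = x n := fun n => hRvright _ (hx n).1
      have htv : ∀ n, v < t n := fun n => ((hRm1 v hv).lt_iff_lt hv (ht n).1).mp
        (by show R v v < R (t n) v; rw [(ht n).2, hRvv]; exact (hx n).2)
      have htmono : Antitone t := by
        intro m n hmn
        exact ((hRm1 v hv).le_iff_le (ht n).1 (ht m).1).mp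
          (by show R (t n) v ≤ R (t m) v; rw [(ht m).2, (ht n).2]; exact hmono.antitone hmn)
      have hbt : BddBelow (Set.range t) := ⟨v, by rintro _ ⟨n, rfl⟩; exact (htv n).le⟩
      have httend : Tendsto t atTop (𝓝 (⨅ n, t n)) := tendsto_atTop_ciInf htmono hbt
      set τ := ⨅ n, t n with hτdef
      have hτI : τ ∈ I := hIc.out hv (ht 0).1 ⟨le_ciInf fun n => (htv n).le, ciInf_le hbt 0⟩
      have httend' : Tendsto t atTop (𝓝[I] τ) :=
        tendsto_nhdsWithin_of_tendsto_nhds_of_eventually_within _ httend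
          (Eventually.of_forall fun n => (ht n).1)
      have hRτ : Tendsto (fun n => R (t n) v) atTop (𝓝 (R τ v)) :=
        ((hRc1 v hv τ hτI).tendsto).comp httend'
      have hRτl : R τ v = l :=
        tendsto_nhds_unique (hRτ.congr fun n => (ht n).2) hten
      have hτv : v < τ := ((hRm1 v hv).lt_iff_lt hv hτI).mp
        (by show R v v < R τ v; rw [hRτl, hRvv]; exact hllt)
      have hLτ : Tendsto (fun n => L (t n) v) atTop (𝓝 (L τ v)) :=
        ((hLc1 v hv τ hτI).tendsto).comp httend'
      have hLx : ∀ n, L (t n) v = x (n + 1) := by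
        intro n
        rw [hxsucc n, hψ (x n)]
      have hshift : Tendsto (fun n => x (n + 1)) atTop (𝓝 l) :=
        hten.comp (tendsto_add_atTop_nat 1)
      have hLτl : L τ v = l := tendsto_nhds_unique (hLτ.congr hLx) hshift
      have hcontra := hgt τ hτI hτv
      rw [hRτl, hLτl] at hcontra
      exact lt_irrefl _ hcontra
    exact ⟨Or.inr hmono, hlv ▸ hten⟩
end

section
/- Let L, R : I×I → ℝ be continuous strictly monotone means, ψ_v := L_v ∘ R_v⁻¹ with L_v(t)=L(t,v), R_v(t)=R(t,v). For any fixed u ∈ I, the function v ↦ ψ_v(u) = L(R_v⁻¹(u), v) is continuous on D(u) = {v ∈ I : u ∈ R_v(I)}. -/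
/-- Lemma: for fixed `u ∈ I`, the map `v ↦ ψ_v(u) = L(R_v⁻¹(u), v)` is
continuous on `D(u)`. -/
theorem psi_continuous_in_v (I : Set ℝ) (hI : IsOpen I) (hIne : I.Nonempty)
    (hIc : I.OrdConnected) (L R : ℝ → ℝ → ℝ)
    (hLc1 : ∀ y ∈ I, ContinuousOn (fun x => L x y) I)
    (hLc2 : ∀ x ∈ I, ContinuousOn (fun y => L x y) I)
    (hLm1 : ∀ y ∈ I, StrictMonoOn (fun x => L x y) I)
    (hLm2 : ∀ x ∈ I, StrictMonoOn (fun y => L x y) I)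
    (hLmean : ∀ x ∈ I, ∀ y ∈ I, min x y ≤ L x y ∧ L x y ≤ max x y)
    (hRc1 : ∀ y ∈ I, ContinuousOn (fun x => R x y) I)
    (hRc2 : ∀ x ∈ I, ContinuousOn (fun y => R x y) I)
    (hRm1 : ∀ y ∈ I, StrictMonoOn (fun x => R x y) I)
    (hRm2 : ∀ x ∈ I, StrictMonoOn (fun y => R x y) I)
    (hRmean : ∀ x ∈ I, ∀ y ∈ I, min x y ≤ R x y ∧ R x y ≤ max x y)
    (Rinv : ℝ → ℝ → ℝ)
    (hRleft : ∀ v ∈ I, ∀ t ∈ I, Rinv (R t v) v = t)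
    (hRright : ∀ v ∈ I, ∀ z ∈ (fun t => R t v) '' I,
      Rinv z v ∈ I ∧ R (Rinv z v) v = z)
    (u : ℝ) (hu : u ∈ I) :
    ContinuousOn (fun v => L (Rinv u v) v) {v ∈ I | u ∈ (fun t => R t v) '' I} := by
  intro v₀ hv₀mem
  obtain ⟨hv₀, t₀, ht₀, hRt₀⟩ := hv₀mem
  have hinv0 : Rinv u v₀ = t₀ := by rw [← hRt₀]; exact hRleft v₀ hv₀ t₀ ht₀
  rw [Metric.continuousWithinAt_iff]
  intro ε hε
  obtain ⟨δI, hδI, hball⟩ := Metric.isOpen_iff.1 hI t₀ ht₀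
  have hLx : ContinuousAt (fun x => L x v₀) t₀ :=
    (hLc1 v₀ hv₀).continuousAt (hI.mem_nhds ht₀)
  obtain ⟨δL, hδL, hδLspec⟩ := Metric.continuousAt_iff.1 hLx (ε / 2) (by linarith)
  set δ₁ := min (δL / 2) (δI / 2) with hδ₁def
  have hδ₁ : 0 < δ₁ := lt_min (by linarith) (by linarith)
  have hδ₁L : δ₁ ≤ δL / 2 := min_le_left _ _
  have hδ₁I : δ₁ ≤ δI / 2 := min_le_right _ _
  set a := t₀ - δ₁ with ha_def
  set b := t₀ + δ₁ with hb_def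
  have hda : dist a t₀ = δ₁ := by
    rw [Real.dist_eq, show a - t₀ = -δ₁ by ring, abs_neg, abs_of_pos hδ₁]
  have hdb : dist b t₀ = δ₁ := by
    rw [Real.dist_eq, show b - t₀ = δ₁ by ring, abs_of_pos hδ₁]
  have haI : a ∈ I := hball (by rw [Metric.mem_ball, hda]; linarith)
  have hbI : b ∈ I := hball (by rw [Metric.mem_ball, hdb]; linarith)
  have hLa0 : dist (L a v₀) (L t₀ v₀) < ε / 2 := hδLspec (by rw [hda]; linarith)
  have hLb0 : dist (L b v₀) (L t₀ v₀) < ε / 2 := hδLspec (by rw [hdb]; linarith)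
  rw [Real.dist_eq, abs_lt] at hLa0 hLb0
  -- continuity in v of L a ·, L b ·
  obtain ⟨δ2a, hδ2a, hδ2aspec⟩ := Metric.continuousAt_iff.1
    ((hLc2 a haI).continuousAt (hI.mem_nhds hv₀)) (ε / 2) (by linarith)
  obtain ⟨δ2b, hδ2b, hδ2bspec⟩ := Metric.continuousAt_iff.1
    ((hLc2 b hbI).continuousAt (hI.mem_nhds hv₀)) (ε / 2) (by linarith)
  -- continuity in v of R a ·, R b ·
  have hRa0 : R a v₀ < u := by
    rw [← hRt₀]; exact hRm1 v₀ hv₀ haI ht₀ (by simp [ha_def]; linarith)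
  have hRb0 : u < R b v₀ := by
    rw [← hRt₀]; exact hRm1 v₀ hv₀ ht₀ hbI (by simp [hb_def]; linarith)
  obtain ⟨δ3a, hδ3a, hδ3aspec⟩ := Metric.continuousAt_iff.1
    ((hRc2 a haI).continuousAt (hI.mem_nhds hv₀)) (u - R a v₀) (by linarith)
  obtain ⟨δ3b, hδ3b, hδ3bspec⟩ := Metric.continuousAt_iff.1
    ((hRc2 b hbI).continuousAt (hI.mem_nhds hv₀)) (R b v₀ - u) (by linarith)
  refine ⟨min (min δ2a δ2b) (min δ3a δ3b), lt_min (lt_min hδ2a hδ2b) (lt_min hδ3a hδ3b), ?_⟩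
  intro v hv hdv
  obtain ⟨hvI, himg⟩ := hv
  have hd2a : dist v v₀ < δ2a := lt_of_lt_of_le hdv (le_trans (min_le_left _ _) (min_le_left _ _))
  have hd2b : dist v v₀ < δ2b := lt_of_lt_of_le hdv (le_trans (min_le_left _ _) (min_le_right _ _))
  have hd3a : dist v v₀ < δ3a := lt_of_lt_of_le hdv (le_trans (min_le_right _ _) (min_le_left _ _))
  have hd3b : dist v v₀ < δ3b := lt_of_lt_of_le hdv (le_trans (min_le_right _ _) (min_le_right _ _))
  obtain ⟨htI, hRt⟩ := hRright v hvI u himg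
  set t := Rinv u v with ht_def
  -- R a v < u < R b v
  have hRav : R a v < u := by
    have := hδ3aspec hd3a
    rw [Real.dist_eq, abs_lt] at this
    linarith [this.2]
  have hRbv : u < R b v := by
    have := hδ3bspec hd3b
    rw [Real.dist_eq, abs_lt] at this
    linarith [this.1]
  -- hence a < t < b
  have hat : a < t := by
    rw [← (hRm1 v hvI).lt_iff_lt haI htI]
    rw [hRt] at *; exact hRav
  have htb : t < b := by
    rw [← (hRm1 v hvI).lt_iff_lt htI hbI]
    rw [hRt] at *; exact hRbv
  -- sandwich in x
  have hL1 : L a v < L t v := hLm1 v hvI haI htI hat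
  have hL2 : L t v < L b v := hLm1 v hvI htI hbI htb
  have hLav : |L a v - L a v₀| < ε / 2 := by
    have := hδ2aspec hd2a; rwa [Real.dist_eq] at this
  have hLbv : |L b v - L b v₀| < ε / 2 := by
    have := hδ2bspec hd2b; rwa [Real.dist_eq] at this
  rw [abs_lt] at hLav hLbv
  rw [hinv0, Real.dist_eq, abs_lt]
  constructor <;> simp only [ht_def] at hL1 hL2 <;> [linarith [hLav.1, hLa0.1]; linarith [hLbv.2, hLb0.2]]
end

section
/- Local-to-global extension: Let M : I×I → ℝ be a continuous strictly monotone mean and Φ : I → ℝ a continuous strictly monotone function such that M(x,y) = A_Φ(M(x,M(x,y)), M(M(x,y),y)) for all x,y ∈ I (iterative quasi-arithmeticity). If for every p ∈ I there exists an open neighborhood U_p ⊆ I of p such that M = A_Φ on U_p × U_p, then M = A_Φ on all of I × I. -/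
open Filter Topology

/-- One-sided joint approximation from below, using only separate continuity. -/
private lemma joint_lower (I : Set ℝ) (hI : IsOpen I) (M : ℝ → ℝ → ℝ)
    (hMc1 : ∀ y ∈ I, ContinuousOn (fun x => M x y) I)
    (hMc2 : ∀ x ∈ I, ContinuousOn (fun y => M x y) I)
    (u v : ℝ) (hu : u ∈ I) (hv : v ∈ I) (ε : ℝ) (hε : 0 < ε) :
    ∃ u' v', u' ∈ I ∧ v' ∈ I ∧ u' < u ∧ v' < v ∧ |M u' v' - M u v| < ε := by
  have c1 : ContinuousAt (fun t => M t v) u :=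
    (hMc1 v hv).continuousAt (hI.mem_nhds hu)
  obtain ⟨δ1, hδ1pos, hδ1⟩ := Metric.continuousAt_iff.1 c1 (ε/2) (by positivity)
  obtain ⟨r1, hr1pos, hr1⟩ := Metric.isOpen_iff.1 hI u hu
  set u' := u - min δ1 r1 / 2 with hu'def
  have hmin1 : 0 < min δ1 r1 := lt_min hδ1pos hr1pos
  have hd1 : dist u' u < min δ1 r1 := by
    rw [Real.dist_eq, hu'def, abs_of_nonpos (by linarith)]
    linarith
  have hu'I : u' ∈ I := hr1 (Metric.mem_ball.2 (hd1.trans_le (min_le_right _ _)))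
  have h1 : |M u' v - M u v| < ε/2 := by
    have := hδ1 (hd1.trans_le (min_le_left _ _))
    rwa [Real.dist_eq] at this
  have c2 : ContinuousAt (fun t => M u' t) v :=
    (hMc2 u' hu'I).continuousAt (hI.mem_nhds hv)
  obtain ⟨δ2, hδ2pos, hδ2⟩ := Metric.continuousAt_iff.1 c2 (ε/2) (by positivity)
  obtain ⟨r2, hr2pos, hr2⟩ := Metric.isOpen_iff.1 hI v hv
  set v' := v - min δ2 r2 / 2 with hv'def
  have hmin2 : 0 < min δ2 r2 := lt_min hδ2pos hr2pos
  have hd2 : dist v' v < min δ2 r2 := by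
    rw [Real.dist_eq, hv'def, abs_of_nonpos (by linarith)]
    linarith
  have hv'I : v' ∈ I := hr2 (Metric.mem_ball.2 (hd2.trans_le (min_le_right _ _)))
  have h2 : |M u' v' - M u' v| < ε/2 := by
    have := hδ2 (hd2.trans_le (min_le_left _ _))
    rwa [Real.dist_eq] at this
  refine ⟨u', v', hu'I, hv'I, by rw [hu'def]; linarith, by rw [hv'def]; linarith, ?_⟩
  have e1 := abs_lt.1 h1
  have e2 := abs_lt.1 h2
  rw [abs_lt]
  constructor <;> linarith [e1.1, e1.2, e2.1, e2.2]

/-- One-sided joint approximation from above, using only separate continuity. -/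
private lemma joint_upper (I : Set ℝ) (hI : IsOpen I) (M : ℝ → ℝ → ℝ)
    (hMc1 : ∀ y ∈ I, ContinuousOn (fun x => M x y) I)
    (hMc2 : ∀ x ∈ I, ContinuousOn (fun y => M x y) I)
    (u v : ℝ) (hu : u ∈ I) (hv : v ∈ I) (ε : ℝ) (hε : 0 < ε) :
    ∃ u' v', u' ∈ I ∧ v' ∈ I ∧ u < u' ∧ v < v' ∧ |M u' v' - M u v| < ε := by
  have c1 : ContinuousAt (fun t => M t v) u :=
    (hMc1 v hv).continuousAt (hI.mem_nhds hu)
  obtain ⟨δ1, hδ1pos, hδ1⟩ := Metric.continuousAt_iff.1 c1 (ε/2) (by positivity)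
  obtain ⟨r1, hr1pos, hr1⟩ := Metric.isOpen_iff.1 hI u hu
  set u' := u + min δ1 r1 / 2 with hu'def
  have hmin1 : 0 < min δ1 r1 := lt_min hδ1pos hr1pos
  have hd1 : dist u' u < min δ1 r1 := by
    rw [Real.dist_eq, hu'def, abs_of_nonneg (by linarith)]
    linarith
  have hu'I : u' ∈ I := hr1 (Metric.mem_ball.2 (hd1.trans_le (min_le_right _ _)))
  have h1 : |M u' v - M u v| < ε/2 := by
    have := hδ1 (hd1.trans_le (min_le_left _ _))
    rwa [Real.dist_eq] at this
  have c2 : ContinuousAt (fun t => M u' t) v :=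
    (hMc2 u' hu'I).continuousAt (hI.mem_nhds hv)
  obtain ⟨δ2, hδ2pos, hδ2⟩ := Metric.continuousAt_iff.1 c2 (ε/2) (by positivity)
  obtain ⟨r2, hr2pos, hr2⟩ := Metric.isOpen_iff.1 hI v hv
  set v' := v + min δ2 r2 / 2 with hv'def
  have hmin2 : 0 < min δ2 r2 := lt_min hδ2pos hr2pos
  have hd2 : dist v' v < min δ2 r2 := by
    rw [Real.dist_eq, hv'def, abs_of_nonneg (by linarith)]
    linarith
  have hv'I : v' ∈ I := hr2 (Metric.mem_ball.2 (hd2.trans_le (min_le_right _ _)))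
  have h2 : |M u' v' - M u' v| < ε/2 := by
    have := hδ2 (hd2.trans_le (min_le_left _ _))
    rwa [Real.dist_eq] at this
  refine ⟨u', v', hu'I, hv'I, by rw [hu'def]; linarith, by rw [hv'def]; linarith, ?_⟩
  have e1 := abs_lt.1 h1
  have e2 := abs_lt.1 h2
  rw [abs_lt]
  constructor <;> linarith [e1.1, e1.2, e2.1, e2.2]

/-- Local-to-global extension theorem: an iteratively quasi-arithmetic,
continuous, strictly monotone mean that locally coincides with `A_Φ` near
every diagonal point coincides with `A_Φ` globally. -/
theorem local_to_global_quasiArithmetic (I : Set ℝ) (hI : IsOpen I)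
    (hIne : I.Nonempty) (hIc : I.OrdConnected) (M : ℝ → ℝ → ℝ)
    (hMc1 : ∀ y ∈ I, ContinuousOn (fun x => M x y) I)
    (hMc2 : ∀ x ∈ I, ContinuousOn (fun y => M x y) I)
    (hMm1 : ∀ y ∈ I, StrictMonoOn (fun x => M x y) I)
    (hMm2 : ∀ x ∈ I, StrictMonoOn (fun y => M x y) I)
    (hMmean : ∀ x ∈ I, ∀ y ∈ I, min x y ≤ M x y ∧ M x y ≤ max x y)
    (Φ Φinv : ℝ → ℝ)
    (hΦc : ContinuousOn Φ I)
    (hΦm : StrictMonoOn Φ I ∨ StrictAntiOn Φ I)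
    (hleft : ∀ x ∈ I, Φinv (Φ x) = x)
    (hright : ∀ z ∈ Φ '' I, Φinv z ∈ I ∧ Φ (Φinv z) = z)
    (A : ℝ → ℝ → ℝ) (hA : ∀ x y : ℝ, A x y = Φinv ((Φ x + Φ y) / 2))
    (hIQA : ∀ x ∈ I, ∀ y ∈ I, M x y = A (M x (M x y)) (M (M x y) y))
    (hloc : ∀ p ∈ I, ∃ U : Set ℝ, IsOpen U ∧ p ∈ U ∧ U ⊆ I ∧
      ∀ x ∈ U, ∀ y ∈ U, M x y = A x y) :
    ∀ x ∈ I, ∀ y ∈ I, M x y = A x y := by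
  -- the mean is idempotent and I is stable under M
  have hMdiag : ∀ z ∈ I, M z z = z := by
    intro z hz
    have h := hMmean z hz z hz
    simp only [min_self, max_self] at h
    exact le_antisymm h.2 h.1
  have hMmem : ∀ u ∈ I, ∀ v ∈ I, M u v ∈ I := by
    intro u hu v hv
    have h := hMmean u hu v hv
    rcases le_total u v with huv | huv
    · exact hIc.out hu hv ⟨by rw [min_eq_left huv] at h; exact h.1,
        by rw [max_eq_right huv] at h; exact h.2⟩
    · exact hIc.out hv hu ⟨by rw [min_eq_right huv] at h; exact h.1,
        by rw [max_eq_left huv] at h; exact h.2⟩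
  -- the image of Φ is order connected
  have hJ : (Φ '' I).OrdConnected := by
    have hpre : IsPreconnected I := isPreconnected_iff_ordConnected.2 hIc
    exact (hpre.image Φ hΦc).ordConnected
  have havg_mem : ∀ u ∈ I, ∀ v ∈ I, (Φ u + Φ v) / 2 ∈ Φ '' I := by
    intro u hu v hv
    rcases le_total (Φ u) (Φ v) with h | h
    · exact hJ.out ⟨u, hu, rfl⟩ ⟨v, hv, rfl⟩ ⟨by linarith, by linarith⟩
    · exact hJ.out ⟨v, hv, rfl⟩ ⟨u, hu, rfl⟩ ⟨by linarith, by linarith⟩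
  -- the defect function E
  set E : ℝ → ℝ → ℝ := fun u v => Φ (M u v) - (Φ u + Φ v) / 2 with hE
  have hEzero : ∀ u ∈ I, ∀ v ∈ I, E u v = 0 → M u v = A u v := by
    intro u hu v hv h
    have h1 : Φ (M u v) = (Φ u + Φ v) / 2 := by
      have : Φ (M u v) - (Φ u + Φ v) / 2 = 0 := h
      linarith
    calc M u v = Φinv (Φ (M u v)) := (hleft _ (hMmem u hu v hv)).symm
      _ = Φinv ((Φ u + Φ v) / 2) := by rw [h1]
      _ = A u v := (hA u v).symm
  have hEzero' : ∀ u ∈ I, ∀ v ∈ I, M u v = A u v → E u v = 0 := by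
    intro u hu v hv h
    have h2 : Φ (Φinv ((Φ u + Φ v) / 2)) = (Φ u + Φ v) / 2 :=
      (hright _ (havg_mem u hu v hv)).2
    show Φ (M u v) - (Φ u + Φ v) / 2 = 0
    rw [h, hA, h2]
    ring
  -- the key additivity identity
  have hadd : ∀ u ∈ I, ∀ v ∈ I, E u v = E u (M u v) + E (M u v) v := by
    intro u hu v hv
    have hm : M u v ∈ I := hMmem u hu v hv
    have h1 : M u (M u v) ∈ I := hMmem u hu _ hm
    have h2 : M (M u v) v ∈ I := hMmem _ hm v hv
    have havg : (Φ (M u (M u v)) + Φ (M (M u v) v)) / 2 ∈ Φ '' I := havg_mem _ h1 _ h2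
    have hkey : Φ (M u v) = (Φ (M u (M u v)) + Φ (M (M u v) v)) / 2 := by
      conv_lhs => rw [hIQA u hu v hv, hA]
      exact (hright _ havg).2
    show Φ (M u v) - (Φ u + Φ v) / 2 =
      (Φ (M u (M u v)) - (Φ u + Φ (M u v)) / 2) + (Φ (M (M u v) v) - (Φ (M u v) + Φ v) / 2)
    have := hkey
    linarith
  -- betweenness of the mean, as an identity on gaps
  have hbet : ∀ u ∈ I, ∀ v ∈ I, |v - u| = |M u v - u| + |v - M u v| := by
    intro u hu v hv
    have h := hMmean u hu v hv
    rcases le_total u v with huv | huv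
    · rw [min_eq_left huv, max_eq_right huv] at h
      rw [abs_of_nonneg (by linarith : (0:ℝ) ≤ v - u),
        abs_of_nonneg (by linarith : (0:ℝ) ≤ M u v - u),
        abs_of_nonneg (by linarith : (0:ℝ) ≤ v - M u v)]
      ring
    · rw [min_eq_right huv, max_eq_left huv] at h
      rw [abs_of_nonpos (by linarith : v - u ≤ (0:ℝ)),
        abs_of_nonpos (by linarith : M u v - u ≤ (0:ℝ)),
        abs_of_nonpos (by linarith : v - M u v ≤ (0:ℝ))]
      ring
  -- choose the local neighborhoods
  choose U hUopen hUmem hUsub hUeq using hloc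
  -- main argument
  intro x hx y hy
  apply hEzero x hx y hy
  by_contra hbad
  -- set up the compact square
  set a := min x y with hadef
  set b := max x y with hbdef
  have ha : a ∈ I := by
    rcases min_cases x y with ⟨h, _⟩ | ⟨h, _⟩ <;> rw [hadef, h] <;> assumption
  have hb : b ∈ I := by
    rcases max_cases x y with ⟨h, _⟩ | ⟨h, _⟩ <;> rw [hbdef, h] <;> assumption
  have hK : Set.Icc a b ⊆ I := fun t ht => hIc.out ha hb ht
  have hxK : x ∈ Set.Icc a b := ⟨min_le_left _ _, le_max_left _ _⟩
  have hyK : y ∈ Set.Icc a b := ⟨min_le_right _ _, le_max_right _ _⟩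
  -- Lebesgue number
  obtain ⟨δ, hδpos, hδ⟩ := lebesgue_number_lemma_of_metric (s := Set.Icc a b)
    (c := fun i : {p : ℝ // p ∈ I} => U i.1 i.2) isCompact_Icc
    (fun i => hUopen i.1 i.2)
    (fun t ht => Set.mem_iUnion.2 ⟨⟨t, hK ht⟩, hUmem t (hK ht)⟩)
  have hδE : ∀ u ∈ Set.Icc a b, ∀ v ∈ Set.Icc a b, |v - u| < δ → E u v = 0 := by
    intro u hu v hv hd
    obtain ⟨i, hi⟩ := hδ u hu
    have hu' : u ∈ U i.1 i.2 := hi (Metric.mem_ball_self hδpos)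
    have hv' : v ∈ U i.1 i.2 := hi (by
      rw [Metric.mem_ball, Real.dist_eq]; exact hd)
    exact hEzero' u (hUsub i.1 i.2 hu') v (hUsub i.1 i.2 hv') (hUeq i.1 i.2 u hu' v hv')
  -- the set of gaps of bad pairs
  set S : Set ℝ := {r : ℝ | ∃ u v : ℝ, u ∈ Set.Icc a b ∧ v ∈ Set.Icc a b ∧
    E u v ≠ 0 ∧ r = |v - u|} with hSdef
  have hSne : S.Nonempty := ⟨|y - x|, x, y, hxK, hyK, hbad, rfl⟩
  have hSlb : ∀ r ∈ S, δ ≤ r := by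
    rintro r ⟨u, v, hu, hv, hEne, rfl⟩
    by_contra hlt
    exact hEne (hδE u hu v hv (not_le.1 hlt))
  have hSbdd : BddBelow S := ⟨δ, hSlb⟩
  set β := sInf S with hβdef
  have hβδ : δ ≤ β := le_csInf hSne hSlb
  have hβpos : 0 < β := lt_of_lt_of_le hδpos hβδ
  have hβle : ∀ r ∈ S, β ≤ r := fun r hr => csInf_le hSbdd hr
  -- the bad sequence
  have hseq : ∀ n : ℕ, ∃ p : ℝ × ℝ, p.1 ∈ Set.Icc a b ∧ p.2 ∈ Set.Icc a b ∧
      β ≤ |p.2 - p.1| ∧ |p.2 - p.1| < β + 1 / (n + 1) ∧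
      min |M p.1 p.2 - p.1| |p.2 - M p.1 p.2| < 1 / (n + 1) := by
    intro n
    have hpos : (0:ℝ) < 1 / (n + 1) := by positivity
    obtain ⟨r, hrS, hrlt⟩ := (csInf_lt_iff hSbdd hSne).1
      (by linarith : sInf S < β + 1 / (n + 1))
    obtain ⟨u, v, hu, hv, hEne, rfl⟩ := hrS
    have huI := hK hu
    have hvI := hK hv
    have hmab : M u v ∈ Set.Icc a b := by
      have h := hMmean u huI v hvI
      exact ⟨le_trans (le_min hu.1 hv.1) h.1, le_trans h.2 (max_le hu.2 hv.2)⟩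
    have hsplit := hadd u huI v hvI
    have hgap := hbet u huI v hvI
    have hβuv : β ≤ |v - u| := hβle _ ⟨u, v, hu, hv, hEne, rfl⟩
    by_cases h1 : E u (M u v) = 0
    · have h2 : E (M u v) v ≠ 0 := by
        intro h
        apply hEne
        rw [hsplit, h1, h]; ring
      have hb2 : β ≤ |v - M u v| := hβle _ ⟨M u v, v, hmab, hv, h2, rfl⟩
      exact ⟨(u, v), hu, hv, hβuv, hrlt,
        lt_of_le_of_lt (min_le_left _ _) (by linarith)⟩
    · have hb2 : β ≤ |M u v - u| := hβle _ ⟨u, M u v, hu, hmab, h1, rfl⟩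
      exact ⟨(u, v), hu, hv, hβuv, hrlt,
        lt_of_le_of_lt (min_le_right _ _) (by linarith)⟩
  choose p hp1 hp2 hp3 hp4 hp5 using hseq
  -- extract a convergent subsequence
  obtain ⟨q, hq, φ, hφ, hconv⟩ := (isCompact_Icc.prod isCompact_Icc).tendsto_subseq
    (x := p) (fun n => Set.mk_mem_prod (hp1 n) (hp2 n))
  have hq1 : q.1 ∈ Set.Icc a b := hq.1
  have hq2 : q.2 ∈ Set.Icc a b := hq.2
  have hq1I : q.1 ∈ I := hK hq1
  have hq2I : q.2 ∈ I := hK hq2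
  have htu : Tendsto (fun n => (p (φ n)).1) atTop (𝓝 q.1) :=
    (continuous_fst.tendsto q).comp hconv
  have htv : Tendsto (fun n => (p (φ n)).2) atTop (𝓝 q.2) :=
    (continuous_snd.tendsto q).comp hconv
  -- the limit pair is separated
  have hβq : β ≤ |q.2 - q.1| :=
    ge_of_tendsto ((htv.sub htu).abs) (Filter.Eventually.of_forall fun n => hp3 (φ n))
  have hne : q.1 ≠ q.2 := by
    intro h
    rw [h] at hβq
    simp at hβq
    linarith
  -- the split point of the limit pair is strictly between
  have hstrict : (q.1 < M q.1 q.2 ∧ M q.1 q.2 < q.2) ∨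
      (q.2 < M q.1 q.2 ∧ M q.1 q.2 < q.1) := by
    rcases lt_or_gt_of_ne hne with h | h
    · left
      constructor
      · have := (hMm2 q.1 hq1I) hq1I hq2I h
        simpa [hMdiag q.1 hq1I] using this
      · have := (hMm1 q.2 hq2I) hq1I hq2I h
        simpa [hMdiag q.2 hq2I] using this
    · right
      constructor
      · have := (hMm1 q.2 hq2I) hq2I hq1I h
        simpa [hMdiag q.2 hq2I] using this
      · have := (hMm2 q.1 hq1I) hq2I hq1I h
        simpa [hMdiag q.1 hq1I] using this
  -- the split points converge to the split point of the limit
  have hmconv : Tendsto (fun n => M (p (φ n)).1 (p (φ n)).2) atTop (𝓝 (M q.1 q.2)) := by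
    rw [tendsto_order]
    constructor
    · intro c hc
      obtain ⟨u', v', hu'I, hv'I, hu'lt, hv'lt, habs⟩ := joint_lower I hI M hMc1 hMc2
        q.1 q.2 hq1I hq2I (M q.1 q.2 - c) (by linarith)
      have hMl : c < M u' v' := by
        have := abs_lt.1 habs
        linarith [this.1]
      have hev1 : ∀ᶠ n in atTop, u' < (p (φ n)).1 := (tendsto_order.1 htu).1 u' hu'lt
      have hev2 : ∀ᶠ n in atTop, v' < (p (φ n)).2 := (tendsto_order.1 htv).1 v' hv'lt
      filter_upwards [hev1, hev2] with n h1n h2n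
      have huI' := hK (hp1 (φ n))
      have hvI' := hK (hp2 (φ n))
      have s1 : M u' v' < M u' (p (φ n)).2 := (hMm2 u' hu'I) hv'I hvI' h2n
      have s2 : M u' (p (φ n)).2 < M (p (φ n)).1 (p (φ n)).2 :=
        (hMm1 _ hvI') hu'I huI' h1n
      linarith
    · intro c hc
      obtain ⟨u', v', hu'I, hv'I, hu'lt, hv'lt, habs⟩ := joint_upper I hI M hMc1 hMc2
        q.1 q.2 hq1I hq2I (c - M q.1 q.2) (by linarith)
      have hMl : M u' v' < c := by
        have := abs_lt.1 habs
        linarith [this.2]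
      have hev1 : ∀ᶠ n in atTop, (p (φ n)).1 < u' := (tendsto_order.1 htu).2 u' hu'lt
      have hev2 : ∀ᶠ n in atTop, (p (φ n)).2 < v' := (tendsto_order.1 htv).2 v' hv'lt
      filter_upwards [hev1, hev2] with n h1n h2n
      have huI' := hK (hp1 (φ n))
      have hvI' := hK (hp2 (φ n))
      have s1 : M (p (φ n)).1 (p (φ n)).2 < M (p (φ n)).1 v' :=
        (hMm2 _ huI') hvI' hv'I h2n
      have s2 : M (p (φ n)).1 v' < M u' v' := (hMm1 v' hv'I) huI' hu'I h1n
      linarith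
  -- limit of the min-distances
  have hminconv : Tendsto (fun n => min |M (p (φ n)).1 (p (φ n)).2 - (p (φ n)).1|
      |(p (φ n)).2 - M (p (φ n)).1 (p (φ n)).2|) atTop
      (𝓝 (min |M q.1 q.2 - q.1| |q.2 - M q.1 q.2|)) :=
    Filter.Tendsto.min ((hmconv.sub htu).abs) ((htv.sub hmconv).abs)
  have hzero : Tendsto (fun n => (1 : ℝ) / (φ n + 1)) atTop (𝓝 0) := by
    have : Tendsto (fun n : ℕ => (1 : ℝ) / (n + 1)) atTop (𝓝 0) :=
      tendsto_one_div_add_atTop_nhds_zero_nat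
    exact this.comp hφ.tendsto_atTop
  have hle : min |M q.1 q.2 - q.1| |q.2 - M q.1 q.2| ≤ 0 :=
    le_of_tendsto_of_tendsto' hminconv hzero (fun n => (hp5 (φ n)).le)
  -- contradiction: the min is positive
  have hpos : 0 < min |M q.1 q.2 - q.1| |q.2 - M q.1 q.2| := by
    rcases hstrict with ⟨h1, h2⟩ | ⟨h1, h2⟩
    · exact lt_min (abs_pos.2 (by linarith)) (abs_pos.2 (by linarith))
    · exact lt_min (abs_pos.2 (by linarith)) (abs_pos.2 (by linarith))
  linarith
end

section
/- A Matkowski mean M_{f,g}, with f,g : I → ℝ continuous and strictly increasing, is balanced if and only if M_{f,g} equals the quasi-arithmetic mean A_{f+g} generated by f+g on I × I. -/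
/-- A Matkowski mean is balanced iff it is the quasi-arithmetic mean generated
by `f + g`. -/
theorem matkowski_balanced_iff_quasiArithmetic (I : Set ℝ) (hI : IsOpen I)
    (hIne : I.Nonempty) (hIc : I.OrdConnected) (f g Finv : ℝ → ℝ)
    (hfc : ContinuousOn f I) (hgc : ContinuousOn g I)
    (hfm : StrictMonoOn f I) (hgm : StrictMonoOn g I)
    (hleft : ∀ x ∈ I, Finv (f x + g x) = x)
    (hright : ∀ z ∈ (fun t => f t + g t) '' I,
      Finv z ∈ I ∧ f (Finv z) + g (Finv z) = z)
    (himg : ∀ x ∈ I, ∀ y ∈ I, f x + g y ∈ (fun t => f t + g t) '' I)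
    (M : ℝ → ℝ → ℝ) (hM : ∀ x y : ℝ, M x y = Finv (f x + g y)) :
    (∀ x ∈ I, ∀ y ∈ I, M (M x (M x y)) (M (M x y) y) = M x y) ↔
    (∀ x ∈ I, ∀ y ∈ I,
      M x y = Finv (((f x + g x) + (f y + g y)) / 2)) := by
  have hsub : ∀ a ∈ I, ∀ b ∈ I, Set.Icc a b ⊆ I := fun a ha b hb => hIc.out ha hb
  -- Intermediate value theorem on I
  have hIVT : ∀ (φ : ℝ → ℝ), ContinuousOn φ I → ∀ a ∈ I, ∀ b ∈ I, a ≤ b →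
      ∀ z, φ a ≤ z → z ≤ φ b → ∃ x, x ∈ I ∧ φ x = z := by
    intro φ hφ a ha b hb hab z h1 h2
    have hIcc : Set.Icc a b ⊆ I := hsub a ha b hb
    obtain ⟨x, hx, hxz⟩ := intermediate_value_Icc hab (hφ.mono hIcc) ⟨h1, h2⟩
    exact ⟨x, hIcc hx, hxz⟩
  have hFm : StrictMonoOn (fun t => f t + g t) I := fun a ha b hb hab =>
    add_lt_add (hfm ha hb hab) (hgm ha hb hab)
  have hFle : ∀ a ∈ I, ∀ b ∈ I, a ≤ b → f a + g a ≤ f b + g b := by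
    intro a ha b hb hab
    rcases eq_or_lt_of_le hab with rfl | h
    · exact le_refl _
    · exact (hFm ha hb h).le
  have hgle : ∀ a ∈ I, ∀ b ∈ I, a ≤ b → g a ≤ g b := by
    intro a ha b hb hab
    rcases eq_or_lt_of_le hab with rfl | h
    · exact le_refl _
    · exact (hgm ha hb h).le
  -- the average of two F-values is in the image of F
  have havg : ∀ a ∈ I, ∀ b ∈ I,
      ((f a + g a) + (f b + g b)) / 2 ∈ (fun t => f t + g t) '' I := by
    intro a ha b hb
    rcases le_total a b with hab | hab
    · have h1 := hFle a ha b hb hab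
      obtain ⟨x, hx, hxz⟩ := hIVT _ (hfc.add hgc) a ha b hb hab
        (((f a + g a) + (f b + g b)) / 2) (by simp only [Pi.add_apply]; linarith)
        (by simp only [Pi.add_apply]; linarith)
      exact ⟨x, hx, hxz⟩
    · have h1 := hFle b hb a ha hab
      obtain ⟨x, hx, hxz⟩ := hIVT _ (hfc.add hgc) b hb a ha hab
        (((f a + g a) + (f b + g b)) / 2) (by simp only [Pi.add_apply]; linarith)
        (by simp only [Pi.add_apply]; linarith)
      exact ⟨x, hx, hxz⟩
  constructor
  · -- balanced → quasi-arithmetic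
    intro hbal
    -- balance in additive form
    have hbal' : ∀ x ∈ I, ∀ y ∈ I,
        f (Finv (f x + g (Finv (f x + g y)))) + g (Finv (f (Finv (f x + g y)) + g y))
          = f (Finv (f x + g y)) + g (Finv (f x + g y)) := by
      intro x hx y hy
      have hu := hright _ (himg x hx y hy)
      have ha := hright _ (himg x hx _ hu.1)
      have hb := hright _ (himg _ hu.1 y hy)
      have hab := himg _ ha.1 _ hb.1
      have h := hbal x hx y hy
      simp only [hM] at h
      have h2 := (hright _ hab).2
      rw [h] at h2
      exact h2.symm
    -- the key step: f - g takes equal values on suitable pairs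
    have key : ∀ s₁ ∈ I, ∀ c ∈ I, ∀ d ∈ I, ∀ t₁ ∈ I, s₁ < c → c < d → d < t₁ →
        g d - g c ≤ f c - f s₁ → f d - f c ≤ g t₁ - g d →
        f c - g c = f d - g d := by
      intro s₁ hs₁ c hc d hd t₁ ht₁ h1 h2 h3 h4 h5
      have hmid := hright _ (havg c hc d hd)
      set m := Finv (((f c + g c) + (f d + g d)) / 2) with hm_def
      have hmI : m ∈ I := hmid.1
      have hFmval : f m + g m = ((f c + g c) + (f d + g d)) / 2 := hmid.2
      have hFcd : f c + g c < f d + g d := hFm hc hd h2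
      have hcm : c < m := by
        by_contra hcm
        push_neg at hcm
        have := hFle m hmI c hc hcm
        linarith
      have hmd : m < d := by
        by_contra hmd
        push_neg at hmd
        have := hFle d hd m hmI hmd
        linarith
      have hgcm : g c < g m := hgm hc hmI hcm
      have hgmd : g m < g d := hgm hmI hd hmd
      have hfcm : f c < f m := hfm hc hmI hcm
      have hfmd : f m < f d := hfm hmI hd hmd
      -- solve for x and y
      obtain ⟨x, hxI, hxv⟩ := hIVT f hfc s₁ hs₁ c hc h1.le (f c + g c - g m)
        (by linarith) (by linarith)
      obtain ⟨y, hyI, hyv⟩ := hIVT g hgc d hd t₁ ht₁ h3.le (f d + g d - f m)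
        (by linarith) (by linarith)
      have hxy : f x + g y = f m + g m := by rw [hxv, hyv]; linarith
      have humeq : Finv (f x + g y) = m := by rw [hxy]; exact hleft m hmI
      have hb' := hbal' x hxI y hyI
      rw [humeq] at hb'
      have e1 : f x + g m = f c + g c := by rw [hxv]; ring
      have e2 : f m + g y = f d + g d := by rw [hyv]; ring
      rw [e1, e2, hleft c hc, hleft d hd] at hb'
      linarith
    -- propagate: f - g is constant on I
    have hconst : ∀ c ∈ I, ∀ d ∈ I, c ≤ d → f c - g c = f d - g d := by
      intro c hc d hd hcd
      rcases eq_or_lt_of_le hcd with rfl | hcd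
      · rfl
      obtain ⟨ε₁, hε₁, hball₁⟩ := Metric.isOpen_iff.mp hI c hc
      obtain ⟨ε₂, hε₂, hball₂⟩ := Metric.isOpen_iff.mp hI d hd
      have hs₁ : c - ε₁ / 2 ∈ I := by
        apply hball₁
        simp only [Metric.mem_ball, Real.dist_eq]
        rw [show c - ε₁ / 2 - c = -(ε₁ / 2) by ring, abs_neg, abs_of_pos (by linarith)]
        linarith
      have ht₁ : d + ε₂ / 2 ∈ I := by
        apply hball₂
        simp only [Metric.mem_ball, Real.dist_eq]
        rw [show d + ε₂ / 2 - d = ε₂ / 2 by ring, abs_of_pos (by linarith)]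
        linarith
      set s₁ := c - ε₁ / 2 with hs₁def
      set t₁ := d + ε₂ / 2 with ht₁def
      have hs₁c : s₁ < c := by rw [hs₁def]; linarith
      have hdt₁ : d < t₁ := by rw [ht₁def]; linarith
      have hIcc : Set.Icc c d ⊆ I := hsub c hc d hd
      set T := Set.Icc c d ∩ (fun e => f e - g e) ⁻¹' {f c - g c} with hTdef
      have hTsub : T ⊆ Set.Icc c d := Set.inter_subset_left
      have hTne : T.Nonempty := ⟨c, ⟨le_refl c, hcd.le⟩, rfl⟩
      have hTclosed : IsClosed T :=
        ContinuousOn.preimage_isClosed_of_isClosed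
          (((hfc.mono hIcc).sub (hgc.mono hIcc))) isClosed_Icc isClosed_singleton
      have hTcpt : IsCompact T := IsCompact.of_isClosed_subset isCompact_Icc hTclosed hTsub
      have hE := hTcpt.sSup_mem hTne
      set E := sSup T with hEdef
      have hEIcc : E ∈ Set.Icc c d := hTsub hE
      have hEI : E ∈ I := hIcc hEIcc
      have hEval : f E - g E = f c - g c := hE.2
      have hEd : E = d := by
        by_contra hne
        have hlt : E < d := lt_of_le_of_ne hEIcc.2 hne
        -- margins
        have hs₁E : s₁ < E := lt_of_lt_of_le hs₁c hEIcc.1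
        have hA : 0 < f E - f s₁ := by have := hfm hs₁ hEI hs₁E; linarith
        have hB : 0 < g t₁ - g d := by have := hgm hd ht₁ hdt₁; linarith
        have hfE : ContinuousAt f E := hfc.continuousAt (hI.mem_nhds hEI)
        have hgE : ContinuousAt g E := hgc.continuousAt (hI.mem_nhds hEI)
        obtain ⟨δ₁, hδ₁, hf1⟩ := Metric.continuousAt_iff.mp hfE _ hB
        obtain ⟨δ₂, hδ₂, hg1⟩ := Metric.continuousAt_iff.mp hgE _ hA
        set e := min (E + min δ₁ δ₂ / 2) d with hedef
        have hmin : 0 < min δ₁ δ₂ := lt_min hδ₁ hδ₂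
        have hEe : E < e := by
          apply lt_min
          · linarith
          · exact hlt
        have hed : e ≤ d := min_le_right _ _
        have heIcc : e ∈ Set.Icc c d := ⟨le_trans hEIcc.1 hEe.le, hed⟩
        have heI : e ∈ I := hIcc heIcc
        have hdist : dist e E < min δ₁ δ₂ := by
          rw [Real.dist_eq, abs_of_pos (by linarith)]
          have : e ≤ E + min δ₁ δ₂ / 2 := min_le_left _ _
          linarith
        have hfe : |f e - f E| < g t₁ - g d := by
          have := hf1 (lt_of_lt_of_le hdist (min_le_left _ _))
          rwa [Real.dist_eq] at this
        have hge : |g e - g E| < f E - f s₁ := by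
          have := hg1 (lt_of_lt_of_le hdist (min_le_right _ _))
          rwa [Real.dist_eq] at this
        have hget₁ : g e ≤ g d := hgle e heI d hd hed
        have hk := key s₁ hs₁ E hEI e heI t₁ ht₁ hs₁E hEe (lt_of_le_of_lt hed hdt₁)
          (by have := abs_le.mp hfe.le; have := abs_le.mp hge.le; linarith)
          (by have := abs_le.mp hfe.le; linarith)
        have heT : e ∈ T := ⟨heIcc, by simp only [Set.mem_preimage, Set.mem_singleton_iff]; linarith⟩
        have : e ≤ E := le_csSup (hTcpt.bddAbove) heT
        linarith
      rw [← hEd]; linarith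
    intro x hx y hy
    have hh : f x - g x = f y - g y := by
      rcases le_total x y with h | h
      · exact hconst x hx y hy h
      · exact (hconst y hy x hx h).symm
    rw [hM]
    congr 1
    linarith
  · -- quasi-arithmetic → balanced
    intro hQ
    have hkey : ∀ a ∈ I, ∀ b ∈ I, f a + g b = ((f a + g a) + (f b + g b)) / 2 := by
      intro a ha b hb
      have h1 := hright _ (himg a ha b hb)
      have h2 := hright _ (havg a ha b hb)
      have h3 : Finv (f a + g b) = Finv (((f a + g a) + (f b + g b)) / 2) := by
        rw [← hM a b]; exact hQ a ha b hb
      calc f a + g b = f (Finv (f a + g b)) + g (Finv (f a + g b)) := h1.2.symm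
        _ = f (Finv (((f a + g a) + (f b + g b)) / 2))
            + g (Finv (((f a + g a) + (f b + g b)) / 2)) := by rw [h3]
        _ = ((f a + g a) + (f b + g b)) / 2 := h2.2
    intro x hx y hy
    simp only [hM]
    have hu := hright _ (himg x hx y hy)
    set u := Finv (f x + g y) with hu_def
    have ha := hright _ (himg x hx u hu.1)
    have hb := hright _ (himg u hu.1 y hy)
    set a := Finv (f x + g u) with ha_def
    set b := Finv (f u + g y) with hb_def
    have k1 := hkey a ha.1 b hb.1
    have k2 : f a + g a = f x + g u := ha.2
    have k3 : f b + g b = f u + g y := hb.2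
    have k4 := hkey x hx y hy
    have k5 : f u + g u = f x + g y := hu.2
    have h1 : f a + g b = f u + g u := by linarith
    rw [h1, hleft u hu.1]
end
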